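/- Let n ≥ 1 and q ≥ 1, let x₁, …, xₙ ∈ ℝ^q, let y₁, …, yₙ be real numbers, and set c_n = (n/2)^(n/2) * exp(−n/2) / Γ(n/2). Then for every β ∈ ℝ^q with S(β) := ∑_{i=1}^n (yᵢ − ⟨xᵢ, β⟩)² > 0, the profile likelihood for β equals c_n times the marginal likelihood obtained by integrating over the Jeffreys prior p(v) = 1/v on the variance: sup_{v > 0} (2πv)^(-n/2) * exp(−S(β)/(2v)) = c_n * ∫₀^∞ (2πv)^(-n/2) * exp(−S(β)/(2v)) * (1/v) dv, with c_n independent of β and of the data. -/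

import Mathlib

open Real Set MeasureTheory

lemma marg_integral_aux {a S : ℝ} (ha : 0 < a) (hS : 0 < S) :
    ∫ v in Ioi (0 : ℝ), (2 * π * v) ^ (-a) * Real.exp (-S / (2 * v)) * (1 / v)
      = (2 * π) ^ (-a) * ((S / 2) ^ (-a) * Real.Gamma a) := by
  rw [← integral_comp_rpow_Ioi
    (fun v : ℝ => (2 * π * v) ^ (-a) * Real.exp (-S / (2 * v)) * (1 / v))
    (p := -1) (by norm_num)]
  have hcong : ∀ x ∈ Ioi (0 : ℝ),
      (|(-1 : ℝ)| * x ^ ((-1 : ℝ) - 1)) •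
        ((fun v : ℝ => (2 * π * v) ^ (-a) * Real.exp (-S / (2 * v)) * (1 / v)) (x ^ (-1 : ℝ)))
      = (2 * π) ^ (-a) * (x ^ (a - 1) * Real.exp (-(S / 2) * x ^ (1 : ℝ))) := by
    intro x hx
    have hx0 : (0 : ℝ) < x := hx
    simp only [smul_eq_mul, abs_neg, abs_one, one_mul]
    rw [Real.rpow_neg_one x]
    have h1 : 2 * π * x⁻¹ = (2 * π) * x⁻¹ := by ring
    rw [h1, Real.mul_rpow (by positivity) (by positivity)]
    have h2 : (x⁻¹ : ℝ) ^ (-a) = x ^ a := by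
      rw [← Real.rpow_neg_one x, ← Real.rpow_mul hx0.le]; norm_num
    have h3 : -S / (2 * x⁻¹) = -(S / 2) * x ^ (1 : ℝ) := by
      rw [Real.rpow_one]; field_simp
    have h4 : (1 : ℝ) / x⁻¹ = x := by field_simp
    rw [h2, h3, h4]
    have h5 : x ^ ((-1 : ℝ) - 1) = x ^ (-2 : ℝ) := by norm_num
    rw [h5]
    have h6 : x ^ (-2 : ℝ) * x ^ a * x = x ^ (a - 1) := by
      nth_rewrite 3 [← Real.rpow_one x]
      rw [← Real.rpow_add hx0, ← Real.rpow_add hx0]; ring_nf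
    calc x ^ (-2:ℝ) * ((2*π) ^ (-a) * x ^ a * Real.exp (-(S/2) * x ^ (1:ℝ)) * x)
        = (2*π) ^ (-a) * ((x ^ (-2:ℝ) * x ^ a * x) * Real.exp (-(S/2) * x ^ (1:ℝ))) := by ring
      _ = _ := by rw [h6]
  rw [setIntegral_congr_fun measurableSet_Ioi hcong, integral_const_mul]
  congr 1
  have := integral_rpow_mul_exp_neg_mul_rpow (p := 1) (q := a - 1) (b := S / 2)
    zero_lt_one (by linarith) (by positivity)
  rw [this]
  norm_num

lemma sup_aux {a S : ℝ} (ha : 0 < a) (hS : 0 < S) :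
    sSup ((fun v : ℝ => (2 * π * v) ^ (-a) * Real.exp (-S / (2 * v))) '' Ioi 0)
      = (2 * π * (S / (2 * a))) ^ (-a) * Real.exp (-a) := by
  have hv0 : (0 : ℝ) < S / (2 * a) := by positivity
  apply IsGreatest.csSup_eq
  constructor
  · exact ⟨S / (2 * a), hv0, by
      show (2 * π * (S / (2 * a))) ^ (-a) * Real.exp (-S / (2 * (S / (2 * a)))) = _
      rw [show -S / (2 * (S / (2 * a))) = -a by field_simp]⟩
  · rintro w ⟨v, hv, rfl⟩
    have hvpos : (0 : ℝ) < v := hv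
    have hsplit : ∀ u : ℝ, 0 < u → (2 * π * u) ^ (-a) = (2 * π) ^ (-a) * u ^ (-a) := by
      intro u hu
      rw [Real.mul_rpow (by positivity) hu.le]
    simp only [hsplit v hvpos, hsplit _ hv0]
    rw [Real.rpow_def_of_pos hvpos, Real.rpow_def_of_pos hv0, mul_assoc, mul_assoc,
      ← Real.exp_add, ← Real.exp_add]
    refine mul_le_mul_of_nonneg_left (Real.exp_le_exp.mpr ?_) (by positivity)
    have hlog := Real.log_le_sub_one_of_pos (show (0:ℝ) < S / (2 * a) / v by positivity)
    rw [Real.log_div hv0.ne' hvpos.ne'] at hlog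
    have hkey : -S / (2 * v) = -(a * (S / (2 * a) / v)) := by field_simp
    rw [hkey]
    nlinarith [mul_le_mul_of_nonneg_left hlog ha.le]

/-- Result 2 of the paper: In the normal linear regression model, with
`c_n = (n/2)^(n/2) e^(-n/2) / Γ(n/2)`, for every `β` with
`S(β) = ∑ (yᵢ - ⟨xᵢ, β⟩)² > 0`, the profile likelihood for `β` equals `c_n` times
the marginal likelihood under the Jeffreys prior `p(v) = 1/v` on the variance:
`sup_{v>0} (2πv)^(-n/2) exp(-S(β)/(2v)) = c_n ∫₀^∞ (2πv)^(-n/2) exp(-S(β)/(2v)) (1/v) dv`,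
with `c_n` independent of `β` and the data. -/
theorem profile_eq_const_mul_marginal_regression (n q : ℕ) (hn : 1 ≤ n) (hq : 1 ≤ q) :
    ∀ (x : Fin n → EuclideanSpace ℝ (Fin q)) (y : Fin n → ℝ)
      (β : EuclideanSpace ℝ (Fin q)), 0 < ∑ i, (y i - inner ℝ (x i) β : ℝ) ^ 2 →
      sSup ((fun v : ℝ => (2 * π * v) ^ (-(n : ℝ) / 2) *
          Real.exp (-(∑ i, (y i - inner ℝ (x i) β : ℝ) ^ 2) / (2 * v))) '' Ioi 0) =
        ((n : ℝ) / 2) ^ ((n : ℝ) / 2) * Real.exp (-(n : ℝ) / 2) / Real.Gamma ((n : ℝ) / 2) *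
          ∫ v in Ioi (0 : ℝ),
            (2 * π * v) ^ (-(n : ℝ) / 2) *
              Real.exp (-(∑ i, (y i - inner ℝ (x i) β : ℝ) ^ 2) / (2 * v)) * (1 / v) := by
  intro x y β hS
  set S : ℝ := ∑ i, (y i - inner ℝ (x i) β : ℝ) ^ 2 with hSdef
  set a : ℝ := (n : ℝ) / 2 with hadef
  have ha : 0 < a := by
    have : (1 : ℝ) ≤ (n : ℝ) := by exact_mod_cast hn
    rw [hadef]; linarith
  have hexp : -(n : ℝ) / 2 = -a := by rw [hadef]; ring
  simp only [hexp]
  rw [sup_aux ha hS, marg_integral_aux ha hS]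
  have hΓ : Real.Gamma a ≠ 0 := (Real.Gamma_pos_of_pos ha).ne'
  have h1 : 2 * π * (S / (2 * a)) = (2 * π) * ((S / 2) * a⁻¹) := by ring
  rw [h1, Real.mul_rpow (by positivity) (by positivity),
    show ((S / 2) * a⁻¹ : ℝ) ^ (-a) = (S / 2) ^ (-a) * a⁻¹ ^ (-a) from
      Real.mul_rpow (by positivity) (by positivity)]
  have h2 : (a⁻¹ : ℝ) ^ (-a) = a ^ a := by
    rw [← Real.rpow_neg_one a, ← Real.rpow_mul ha.le]; norm_num
  rw [h2]
  field_simp
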